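/- arXiv:2408.14247 — 4 statements merged into one kernel-verified Lean document; each statement's English description precedes it below -/
import Mathlib

section
/- Let r > 0 and let (x_c, y_c) ∈ [0, r] × [0, r] with (x_c, y_c) ≠ (0, 0). Then it is impossible that the circle {(x,y) ∈ ℝ² : (x − x_c)² + (y − y_c)² = r²} meets the segment e_x = {(t,0) : −r ≤ t ≤ r} in two distinct points and also meets the segment e_y = {(0,t) : −r ≤ t ≤ r} in two distinct points. -/
lemma stmt_6_aux (r c d u v : ℝ) (hc : 0 ≤ c) (huv : u ≠ v)
    (hu : (u - c) ^ 2 + d ^ 2 = r ^ 2) (hv : (v - c) ^ 2 + d ^ 2 = r ^ 2)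
    (hur : u ≤ r) (hvr : v ≤ r) :
    d ^ 2 < r ^ 2 ∧ r ^ 2 - d ^ 2 ≤ (r - c) ^ 2 := by
  have h1 : (u - c) ^ 2 = (v - c) ^ 2 := by linarith
  have hsub : u - v ≠ 0 := sub_ne_zero.mpr huv
  have hmul : (u - v) * (u + v - 2 * c) = 0 := by nlinarith [h1]
  have hsum : u + v = 2 * c := by
    rcases mul_eq_zero.mp hmul with h | h
    · exact absurd h hsub
    · linarith
  rcases huv.lt_or_gt with h | h
  · have hpos : 0 < v - c := by linarith
    have hle : v - c ≤ r - c := by linarith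
    constructor
    · nlinarith
    · nlinarith
  · have hpos : 0 < u - c := by linarith
    have hle : u - c ≤ r - c := by linarith
    constructor
    · nlinarith
    · nlinarith


/-- Let `r > 0` and `(x_c, y_c) ∈ [0,r] × [0,r]` with `(x_c, y_c) ≠ (0,0)`. Then it is
impossible that the circle of radius `r` centered at `(x_c, y_c)` meets the segment
`e_x = {(t,0) : −r ≤ t ≤ r}` in two distinct points and also meets the segment
`e_y = {(0,t) : −r ≤ t ≤ r}` in two distinct points. -/
theorem stmt_6 (r xc yc : ℝ) (hr : 0 < r)
    (hx0 : 0 ≤ xc) (hxr : xc ≤ r) (hy0 : 0 ≤ yc) (hyr : yc ≤ r)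
    (hne : (xc, yc) ≠ (0, 0)) :
    ¬ ((∃ p q : ℝ × ℝ, p ≠ q ∧
          (p ∈ {p : ℝ × ℝ | (p.1 - xc) ^ 2 + (p.2 - yc) ^ 2 = r ^ 2 ∧
              p.2 = 0 ∧ -r ≤ p.1 ∧ p.1 ≤ r}) ∧
          (q ∈ {p : ℝ × ℝ | (p.1 - xc) ^ 2 + (p.2 - yc) ^ 2 = r ^ 2 ∧
              p.2 = 0 ∧ -r ≤ p.1 ∧ p.1 ≤ r})) ∧
        (∃ p q : ℝ × ℝ, p ≠ q ∧
          (p ∈ {p : ℝ × ℝ | (p.1 - xc) ^ 2 + (p.2 - yc) ^ 2 = r ^ 2 ∧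
              p.1 = 0 ∧ -r ≤ p.2 ∧ p.2 ≤ r}) ∧
          (q ∈ {p : ℝ × ℝ | (p.1 - xc) ^ 2 + (p.2 - yc) ^ 2 = r ^ 2 ∧
              p.1 = 0 ∧ -r ≤ p.2 ∧ p.2 ≤ r}))) := by
  rintro ⟨⟨p, q, hpq, ⟨hp1, hp2, _, hp4⟩, ⟨hq1, hq2, _, hq4⟩⟩,
          ⟨a, b, hab, ⟨ha1, ha2, _, ha4⟩, ⟨hb1, hb2, _, hb4⟩⟩⟩
  rw [hp2] at hp1
  rw [hq2] at hq1
  rw [ha2] at ha1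
  rw [hb2] at hb1
  have hpq1 : p.1 ≠ q.1 := fun h => hpq (Prod.ext h (hp2.trans hq2.symm))
  have hab2 : a.2 ≠ b.2 := fun h => hab (Prod.ext (ha2.trans hb2.symm) h)
  have hx : yc ^ 2 < r ^ 2 ∧ r ^ 2 - yc ^ 2 ≤ (r - xc) ^ 2 := by
    exact stmt_6_aux r xc yc p.1 q.1 hx0 hpq1 (by linear_combination hp1)
      (by linear_combination hq1) hp4 hq4
  have hy : xc ^ 2 < r ^ 2 ∧ r ^ 2 - xc ^ 2 ≤ (r - yc) ^ 2 := by
    exact stmt_6_aux r yc xc a.2 b.2 hy0 hab2 (by linear_combination ha1)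
      (by linear_combination hb1) ha4 hb4
  have hsumpos : 0 < xc + yc := by
    rcases eq_or_lt_of_le hx0 with h | h
    · rcases eq_or_lt_of_le hy0 with h' | h'
      · exact absurd (by rw [← h, ← h']) hne
      · linarith
    · linarith
  obtain ⟨hA, hB⟩ := hx
  obtain ⟨hC, hD⟩ := hy
  nlinarith [mul_nonneg hx0 (sub_nonneg.mpr hxr), mul_nonneg hy0 (sub_nonneg.mpr hyr),
    mul_pos hsumpos hr]
end

section
/- Let C > 0 and l = (C·√2)/√3. For every p ∈ ℝ³ with ‖p‖ ≤ C, there exist an index i ∈ {1, 2, 3} and a real t with −l ≤ t ≤ l such that ‖p − t·e_i‖ ≤ l, where e_i is the i-th standard basis vector. That is, every point of the closed ball of radius C centered at the origin lies within distance l of at least one of the three coordinate-axis segments of half-length l centered at the origin. -/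
lemma stmt_11_aux (C l a b c : ℝ) (hC : 0 < C)
    (hl : l = C * Real.sqrt 2 / Real.sqrt 3)
    (hsum : a ^ 2 + b ^ 2 + c ^ 2 ≤ C ^ 2) (hb : b ^ 2 ≤ a ^ 2) (hc : c ^ 2 ≤ a ^ 2) :
    ∃ t : ℝ, -l ≤ t ∧ t ≤ l ∧ (a - t) ^ 2 + b ^ 2 + c ^ 2 ≤ l ^ 2 := by
  have hl0 : 0 ≤ l := by rw [hl]; positivity
  have hl2 : l ^ 2 = 2 * C ^ 2 / 3 := by
    rw [hl, div_pow, mul_pow, Real.sq_sqrt (by norm_num : (2:ℝ) ≥ 0),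
      Real.sq_sqrt (by norm_num : (3:ℝ) ≥ 0)]
    ring
  rcases le_total a l with hal | hal
  · rcases le_total (-l) a with hla | hla
    · -- t = a
      refine ⟨a, hla, hal, ?_⟩
      nlinarith
    · -- a ≤ -l, t = -l
      refine ⟨-l, le_refl _, by linarith, ?_⟩
      nlinarith [sq_nonneg (a + l)]
  · -- a ≥ l, t = l
    refine ⟨l, by linarith, le_refl _, ?_⟩
    nlinarith [sq_nonneg (a - l)]

/-- Let `C > 0` and `l = (C·√2)/√3`. Every point `p` of the closed ball of radius `C`
centered at the origin of `ℝ³` lies within distance `l` of at least one of the three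
coordinate-axis segments of half-length `l` centered at the origin. -/
theorem stmt_11 (C l : ℝ) (hC : 0 < C) (hl : l = C * Real.sqrt 2 / Real.sqrt 3)
    (p : EuclideanSpace ℝ (Fin 3)) (hp : ‖p‖ ≤ C) :
    ∃ i : Fin 3, ∃ t : ℝ, -l ≤ t ∧ t ≤ l ∧
      ‖p - t • EuclideanSpace.single i (1 : ℝ)‖ ≤ l := by
  have hl0 : 0 ≤ l := by rw [hl]; positivity
  have hsum : (p 0) ^ 2 + (p 1) ^ 2 + (p 2) ^ 2 ≤ C ^ 2 := by
    have h := hp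
    rw [EuclideanSpace.norm_eq] at h
    have h2 : ∑ j : Fin 3, ‖p j‖ ^ 2 ≤ C ^ 2 := by
      have := Real.sqrt_le_sqrt (le_of_eq (Real.sqrt_sq hC.le).symm) -- dummy
      calc ∑ j : Fin 3, ‖p j‖ ^ 2
          = Real.sqrt (∑ j : Fin 3, ‖p j‖ ^ 2) ^ 2 := by
            rw [Real.sq_sqrt (by positivity)]
        _ ≤ C ^ 2 := by
            apply pow_le_pow_left₀ (Real.sqrt_nonneg _) h
      
    simpa [Fin.sum_univ_three, Real.norm_eq_abs, sq_abs] using h2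
  have key : ∀ (i : Fin 3) (t : ℝ),
      ‖p - t • EuclideanSpace.single i (1 : ℝ)‖ ^ 2
        = ∑ j : Fin 3, (p j - t * (if j = i then 1 else 0)) ^ 2 := by
    intro i t
    rw [EuclideanSpace.norm_eq, Real.sq_sqrt (by positivity)]
    apply Finset.sum_congr rfl
    intro j _
    simp [EuclideanSpace.single_apply, Real.norm_eq_abs, sq_abs]
  have norm_le : ∀ (i : Fin 3) (t : ℝ),
      (∑ j : Fin 3, (p j - t * (if j = i then 1 else 0)) ^ 2) ≤ l ^ 2 →
      ‖p - t • EuclideanSpace.single i (1 : ℝ)‖ ≤ l := by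
    intro i t h
    have h2 : ‖p - t • EuclideanSpace.single i (1 : ℝ)‖ ^ 2 ≤ l ^ 2 := by
      rw [key i t]; exact h
    exact abs_le_abs (a := ‖p - t • EuclideanSpace.single i (1 : ℝ)‖) (b := l) (by nlinarith [norm_nonneg (p - t • EuclideanSpace.single i (1:ℝ))])
      (by nlinarith) |>.trans_eq (abs_of_nonneg hl0) |>.trans_eq' (abs_of_nonneg (norm_nonneg _))
  rcases le_total ((p 1) ^ 2) ((p 0) ^ 2) with h01 | h01
  · rcases le_total ((p 2) ^ 2) ((p 0) ^ 2) with h02 | h02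
    · -- i = 0
      obtain ⟨t, ht1, ht2, ht3⟩ := stmt_11_aux C l (p 0) (p 1) (p 2) hC hl hsum h01 h02
      exact ⟨0, t, ht1, ht2, norm_le 0 t (by simp [Fin.sum_univ_three]; linarith)⟩
    · -- i = 2
      obtain ⟨t, ht1, ht2, ht3⟩ := stmt_11_aux C l (p 2) (p 0) (p 1) hC hl (by linarith)
        h02 (h01.trans h02)
      exact ⟨2, t, ht1, ht2, norm_le 2 t (by simp [Fin.sum_univ_three]; linarith)⟩
  · rcases le_total ((p 2) ^ 2) ((p 1) ^ 2) with h12 | h12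
    · -- i = 1
      obtain ⟨t, ht1, ht2, ht3⟩ := stmt_11_aux C l (p 1) (p 0) (p 2) hC hl (by linarith)
        h01 h12
      exact ⟨1, t, ht1, ht2, norm_le 1 t (by simp [Fin.sum_univ_three]; linarith)⟩
    · -- i = 2
      obtain ⟨t, ht1, ht2, ht3⟩ := stmt_11_aux C l (p 2) (p 0) (p 1) hC hl (by linarith)
        (h01.trans h12) h12
      exact ⟨2, t, ht1, ht2, norm_le 2 t (by simp [Fin.sum_univ_three]; linarith)⟩
end

section
/- Let C > 0 and r = (C·√2)/√3. For every p ∈ ℝ³ with 0 < ‖p‖ ≤ C, there exist an index i ∈ {1, 2, 3} and a real t with −r ≤ t ≤ r such that ‖p − t·e_i‖ = r, where e_i is the i-th standard basis vector. That is, the sphere of radius r centered at p intersects at least one of the three coordinate-axis segments of half-length r centered at the origin. -/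
/-- Auxiliary real-number lemma: solving the quadratic. -/
lemma stmt_12_aux (a r np : ℝ) (hrpos : 0 < r) (ha : 0 ≤ a) (hnp0 : 0 ≤ np)
    (hd : 0 ≤ a ^ 2 + r ^ 2 - np) (hnp : np ≤ 3 / 2 * r ^ 2) :
    ∃ t : ℝ, -r ≤ t ∧ t ≤ r ∧ np - 2 * t * a + t ^ 2 = r ^ 2 := by
  set s := Real.sqrt (a ^ 2 + r ^ 2 - np) with hs
  have hsd : s ^ 2 = a ^ 2 + r ^ 2 - np := Real.sq_sqrt hd
  have hs0 : 0 ≤ s := Real.sqrt_nonneg _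
  refine ⟨a - s, ?_, ?_, by nlinarith [hsd]⟩
  · -- -r ≤ a - s, i.e. s ≤ a + r
    have h1 : s ^ 2 ≤ (a + r) ^ 2 := by nlinarith [mul_nonneg ha hrpos.le]
    have : s ≤ a + r := by
      by_contra h
      push_neg at h
      nlinarith
    linarith
  · rcases le_or_gt a r with h | h
    · linarith
    · have h2ar : np ≤ 2 * a * r := by nlinarith
      have h1 : (a - r) ^ 2 ≤ s ^ 2 := by nlinarith
      have : a - r ≤ s := by
        by_contra hcon
        push_neg at hcon
        nlinarith
      linarith

/-- Let `C > 0` and `r = (C·√2)/√3`. For every `p ∈ ℝ³` with `0 < ‖p‖ ≤ C`, the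
sphere of radius `r` centered at `p` intersects at least one of the three
coordinate-axis segments of half-length `r` centered at the origin. -/
theorem stmt_12 (C r : ℝ) (hC : 0 < C) (hr : r = C * Real.sqrt 2 / Real.sqrt 3)
    (p : EuclideanSpace ℝ (Fin 3)) (hp0 : 0 < ‖p‖) (hpC : ‖p‖ ≤ C) :
    ∃ i : Fin 3, ∃ t : ℝ, -r ≤ t ∧ t ≤ r ∧
      ‖p - t • EuclideanSpace.single i (1 : ℝ)‖ = r := by
  have hrpos : 0 < r := by rw [hr]; positivity
  have hr2 : r ^ 2 = 2 * C ^ 2 / 3 := by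
    rw [hr, div_pow, mul_pow, Real.sq_sqrt (by norm_num : (0:ℝ) ≤ 2),
      Real.sq_sqrt (by norm_num : (0:ℝ) ≤ 3)]
    ring
  obtain ⟨i, -, hi⟩ := Finset.exists_max_image (Finset.univ : Finset (Fin 3))
    (fun j => |p j|) ⟨0, Finset.mem_univ 0⟩
  have hnormsq : ‖p‖ ^ 2 = ∑ j, (p j) ^ 2 := by
    rw [EuclideanSpace.norm_eq, Real.sq_sqrt (by positivity)]
    exact Finset.sum_congr rfl fun j _ => by rw [Real.norm_eq_abs, sq_abs]
  have hsum : ‖p‖ ^ 2 ≤ 3 * |p i| ^ 2 := by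
    rw [hnormsq]
    calc ∑ j, (p j) ^ 2 ≤ ∑ _j : Fin 3, |p i| ^ 2 :=
          Finset.sum_le_sum fun j _ => by
            have h := hi j (Finset.mem_univ j)
            calc (p j) ^ 2 = |p j| ^ 2 := (sq_abs _).symm
              _ ≤ |p i| ^ 2 := pow_le_pow_left₀ (abs_nonneg _) h 2
      _ = 3 * |p i| ^ 2 := by simp [Finset.sum_const]
  have hpC2 : ‖p‖ ^ 2 ≤ C ^ 2 := pow_le_pow_left₀ (norm_nonneg p) hpC 2
  have hnp : ‖p‖ ^ 2 ≤ 3 / 2 * r ^ 2 := by rw [hr2]; linarith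
  have hd : 0 ≤ |p i| ^ 2 + r ^ 2 - ‖p‖ ^ 2 := by nlinarith
  obtain ⟨t', ht1, ht2, ht3⟩ := stmt_12_aux |p i| r (‖p‖ ^ 2) hrpos (abs_nonneg _) (by positivity) hd hnp
  have key : ∀ t : ℝ, ‖p - t • EuclideanSpace.single i (1 : ℝ)‖ ^ 2
      = ‖p‖ ^ 2 - 2 * t * (p i) + t ^ 2 := by
    intro t
    rw [norm_sub_sq_real, real_inner_smul_right]
    have hinner : (inner ℝ p (EuclideanSpace.single i (1 : ℝ)) : ℝ) = p i := by
      rw [EuclideanSpace.inner_single_right]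
      simp
    rw [hinner, norm_smul]
    simp only [norm_one, Real.norm_eq_abs, mul_one, mul_pow, sq_abs,
      EuclideanSpace.norm_single, one_pow]
    ring
  have norm_of_sq : ∀ t : ℝ, ‖p - t • EuclideanSpace.single i (1 : ℝ)‖ ^ 2 = r ^ 2 →
      ‖p - t • EuclideanSpace.single i (1 : ℝ)‖ = r := by
    intro t ht
    rw [← Real.sqrt_sq (norm_nonneg (p - t • EuclideanSpace.single i (1 : ℝ))), ht,
      Real.sqrt_sq hrpos.le]
  by_cases h : 0 ≤ p i
  · refine ⟨i, t', ht1, ht2, norm_of_sq t' ?_⟩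
    rw [key, abs_of_nonneg h] at *
    linarith
  · push_neg at h
    refine ⟨i, -t', by linarith, by linarith, norm_of_sq (-t') ?_⟩
    rw [key]
    rw [abs_of_neg h] at ht3
    nlinarith
end

section
/- Let C > 0, ε ≥ 0, and let s = (s₁, s₂, s₃) and t = (t₁, t₂, t₃) be points of ℝ³ with |s₁ − t₁| ≤ C, |s₂ − t₂| ≤ C, and |s₃ − t₃| ≤ C (in particular this holds whenever the Euclidean distance between s and t is at most C). Then there exist signs σ₁, σ₂, σ₃ ∈ {−1, +1} such that |s₁ + σ₁·C/2 − t₁| ≤ (C + ε)/2, |t₂ + σ₂·C/2 − s₂| ≤ (C + ε)/2, and |t₃ + σ₃·C/2 − s₃| ≤ (C + ε)/2. -/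
lemma sign_pick (C ε a b : ℝ) (hε : 0 ≤ ε) (h : |a - b| ≤ C) :
    ∃ σ : ℝ, (σ = -1 ∨ σ = 1) ∧ |a + σ * (C / 2) - b| ≤ (C + ε) / 2 := by
  rcases le_total a b with hab | hab
  · exact ⟨1, Or.inr rfl, by rw [abs_le] at h ⊢; constructor <;> nlinarith⟩
  · exact ⟨-1, Or.inl rfl, by rw [abs_le] at h ⊢; constructor <;> nlinarith⟩

/-- Let `C > 0`, `ε ≥ 0`, and `s = (s₁,s₂,s₃)`, `t = (t₁,t₂,t₃)` in `ℝ³` with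
`|s₁ − t₁| ≤ C`, `|s₂ − t₂| ≤ C`, `|s₃ − t₃| ≤ C`. Then there exist signs
`σ₁, σ₂, σ₃ ∈ {−1, +1}` such that `|s₁ + σ₁·C/2 − t₁| ≤ (C + ε)/2`,
`|t₂ + σ₂·C/2 − s₂| ≤ (C + ε)/2`, and `|t₃ + σ₃·C/2 − s₃| ≤ (C + ε)/2`. -/
theorem stmt_14 (C ε s₁ s₂ s₃ t₁ t₂ t₃ : ℝ) (hC : 0 < C) (hε : 0 ≤ ε)
    (h1 : |s₁ - t₁| ≤ C) (h2 : |s₂ - t₂| ≤ C) (h3 : |s₃ - t₃| ≤ C) :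
    ∃ σ₁ σ₂ σ₃ : ℝ,
      (σ₁ = -1 ∨ σ₁ = 1) ∧ (σ₂ = -1 ∨ σ₂ = 1) ∧ (σ₃ = -1 ∨ σ₃ = 1) ∧
      |s₁ + σ₁ * (C / 2) - t₁| ≤ (C + ε) / 2 ∧
      |t₂ + σ₂ * (C / 2) - s₂| ≤ (C + ε) / 2 ∧
      |t₃ + σ₃ * (C / 2) - s₃| ≤ (C + ε) / 2 := by
  obtain ⟨σ₁, hσ₁, h₁⟩ := sign_pick C ε s₁ t₁ hε h1
  obtain ⟨σ₂, hσ₂, h₂⟩ := sign_pick C ε t₂ s₂ hε (by rwa [abs_sub_comm])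
  obtain ⟨σ₃, hσ₃, h₃⟩ := sign_pick C ε t₃ s₃ hε (by rwa [abs_sub_comm])
  exact ⟨σ₁, σ₂, σ₃, hσ₁, hσ₂, hσ₃, h₁, h₂, h₃⟩
end
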